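/- Let H be a Hilbert space and (T_k)_{k∈ℤ} a family of bounded linear operators on H, all but finitely many zero, satisfying for all i,k: ‖T_i* T_k‖ ≤ C²·ω(i−k) and ‖T_i T_k*‖ ≤ C²·ω(i−k), where ω : ℤ → [0,∞) satisfies A := ∑_{n∈ℤ} ω(n)^(1/2) < ∞. Then ‖∑_k T_k‖ ≤ C·A. -/

import Mathlib

open scoped BigOperators
open Finset

namespace CotlarSteinAux

variable {H : Type*} [NormedAddCommGroup H] [InnerProductSpace ℂ H] [CompleteSpace H]

noncomputable def csU (T : ℤ → H →L[ℂ] H) (j : ℕ) (k : ℤ) : H →L[ℂ] H :=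
  if Even j then star (T k) else T k

noncomputable def csWord (T : ℤ → H →L[ℂ] H) (g : ℕ → ℤ) : ℕ → H →L[ℂ] H
  | 0 => 1
  | m + 1 => csWord T g m * csU T m (g m)

noncomputable def csSprod (T : ℤ → H →L[ℂ] H) (F : Finset ℤ) : ℕ → H →L[ℂ] H
  | 0 => 1
  | m + 1 => csSprod T F m * ∑ k ∈ F, csU T m k

def csExt {m : ℕ} (g : Fin m → ℤ) : ℕ → ℤ := fun j => if h : j < m then g ⟨j, h⟩ else 0

def csSnoc {m : ℕ} (g : Fin m → ℤ) (k : ℤ) : Fin (m + 1) → ℤ := Fin.snoc g k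

theorem csSnoc_castSucc {m : ℕ} (g : Fin m → ℤ) (k : ℤ) (i : Fin m) :
    csSnoc g k (Fin.castSucc i) = g i := by simp [csSnoc]

theorem csSnoc_last {m : ℕ} (g : Fin m → ℤ) (k : ℤ) :
    csSnoc g k (Fin.last m) = k := by simp [csSnoc]

theorem csSnoc_eta {m : ℕ} (g : Fin (m + 1) → ℤ) :
    csSnoc (fun i => g (Fin.castSucc i)) (g (Fin.last m)) = g := by
  funext i
  refine Fin.lastCases ?_ ?_ i
  · exact csSnoc_last _ _
  · intro i; exact csSnoc_castSucc _ _ i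

theorem csWord_congr (T : ℤ → H →L[ℂ] H) {g g' : ℕ → ℤ} :
    ∀ m : ℕ, (∀ j < m, g j = g' j) → csWord T g m = csWord T g' m
  | 0, _ => rfl
  | m + 1, h => by
      rw [csWord, csWord, csWord_congr T m (fun j hj => h j (hj.trans m.lt_succ_self)),
        h m m.lt_succ_self]

theorem csExt_snoc_lt {m : ℕ} (g : Fin m → ℤ) (k : ℤ) {j : ℕ} (hj : j < m) :
    csExt (csSnoc g k) j = csExt g j := by
  have hj' : j < m + 1 := hj.trans m.lt_succ_self
  rw [csExt, csExt, dif_pos hj', dif_pos hj]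
  have : (⟨j, hj'⟩ : Fin (m + 1)) = Fin.castSucc ⟨j, hj⟩ := rfl
  rw [this, csSnoc_castSucc]

theorem csExt_snoc_last {m : ℕ} (g : Fin m → ℤ) (k : ℤ) :
    csExt (csSnoc g k) m = k := by
  rw [csExt, dif_pos m.lt_succ_self]
  have : (⟨m, m.lt_succ_self⟩ : Fin (m + 1)) = Fin.last m := rfl
  rw [this, csSnoc_last]

theorem csSprod_expand (T : ℤ → H →L[ℂ] H) (F : Finset ℤ) :
    ∀ m : ℕ, csSprod T F m =
      ∑ g ∈ Fintype.piFinset (fun _ : Fin m => F), csWord T (csExt g) m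
  | 0 => by
      have h : ∀ g ∈ Fintype.piFinset (fun _ : Fin 0 => F), csWord T (csExt g) 0 = 1 :=
        fun _ _ => rfl
      rw [csSprod, Finset.sum_congr rfl h, Finset.sum_const, Fintype.card_piFinset]
      simp
  | m + 1 => by
      rw [csSprod, csSprod_expand T F m, Finset.sum_mul_sum, ← Finset.sum_product']
      refine Finset.sum_bij' (fun (p : (Fin m → ℤ) × ℤ) (_ : p ∈ _) => csSnoc p.1 p.2)
        (fun (g : Fin (m + 1) → ℤ) (_ : g ∈ _) =>
          ((fun i => g (Fin.castSucc i)), g (Fin.last m))) ?_ ?_ ?_ ?_ ?_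
      · intro p hp
        rw [Finset.mem_product] at hp
        rw [Fintype.mem_piFinset]
        intro i
        refine Fin.lastCases ?_ ?_ i
        · rw [csSnoc_last]; exact hp.2
        · intro i
          rw [csSnoc_castSucc]
          exact Fintype.mem_piFinset.mp hp.1 i
      · intro g hg
        rw [Finset.mem_product]
        exact ⟨Fintype.mem_piFinset.mpr fun i => Fintype.mem_piFinset.mp hg _,
          Fintype.mem_piFinset.mp hg _⟩
      · intro p hp
        ext i
        · show csSnoc p.1 p.2 (Fin.castSucc i) = p.1 i
          rw [csSnoc_castSucc]
        · show csSnoc p.1 p.2 (Fin.last m) = p.2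
          rw [csSnoc_last]
      · intro g hg
        exact csSnoc_eta g
      · intro p hp
        show csWord T (csExt p.1) m * csU T m p.2 = csWord T (csExt (csSnoc p.1 p.2)) (m + 1)
        rw [csWord, csWord_congr T m (fun j hj => csExt_snoc_lt p.1 p.2 hj),
          csExt_snoc_last p.1 p.2]
theorem csWord_even_bound (T : ℤ → H →L[ℂ] H) :
    ∀ (n : ℕ) (g : ℕ → ℤ), ‖csWord T g (2 * n)‖ ≤
      ∏ r ∈ Finset.range n, ‖csU T (2 * r) (g (2 * r)) * csU T (2 * r + 1) (g (2 * r + 1))‖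
  | 0, g => by
      simp only [Finset.range_zero, Finset.prod_empty]
      show ‖(1 : H →L[ℂ] H)‖ ≤ 1
      rw [ContinuousLinearMap.one_def]
      exact ContinuousLinearMap.norm_id_le
  | n + 1, g => by
      have e : 2 * (n + 1) = 2 * n + 1 + 1 := by ring
      rw [e, csWord, csWord, mul_assoc, Finset.prod_range_succ]
      show ‖csWord T g (2 * n) * (csU T (2 * n) (g (2 * n)) * csU T (2 * n + 1) (g (2 * n + 1)))‖ ≤ _
      calc ‖csWord T g (2 * n) * (csU T (2 * n) (g (2 * n)) * csU T (2 * n + 1) (g (2 * n + 1)))‖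
          ≤ ‖csWord T g (2 * n)‖ * ‖csU T (2 * n) (g (2 * n)) * csU T (2 * n + 1) (g (2 * n + 1))‖ :=
            norm_mul_le _ _
        _ ≤ (∏ r ∈ Finset.range n, ‖csU T (2 * r) (g (2 * r)) * csU T (2 * r + 1) (g (2 * r + 1))‖) *
              ‖csU T (2 * n) (g (2 * n)) * csU T (2 * n + 1) (g (2 * n + 1))‖ :=
            mul_le_mul_of_nonneg_right (csWord_even_bound T n g) (norm_nonneg _)

theorem csWord_odd_bound (T : ℤ → H →L[ℂ] H) :
    ∀ (n : ℕ) (g : ℕ → ℤ), ‖csWord T g (2 * n + 1)‖ ≤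
      ‖csU T 0 (g 0)‖ *
        ∏ r ∈ Finset.range n, ‖csU T (2 * r + 1) (g (2 * r + 1)) * csU T (2 * r + 2) (g (2 * r + 2))‖
  | 0, g => by
      simp only [Finset.range_zero, Finset.prod_empty, mul_one]
      show ‖(1 : H →L[ℂ] H) * csU T 0 (g 0)‖ ≤ _
      rw [one_mul]
  | n + 1, g => by
      have e : 2 * (n + 1) + 1 = 2 * n + 1 + 1 + 1 := by ring
      rw [e, csWord, csWord, mul_assoc, Finset.prod_range_succ]
      show ‖csWord T g (2 * n + 1) *
          (csU T (2 * n + 1) (g (2 * n + 1)) * csU T (2 * n + 2) (g (2 * n + 2)))‖ ≤ _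
      calc ‖csWord T g (2 * n + 1) *
            (csU T (2 * n + 1) (g (2 * n + 1)) * csU T (2 * n + 2) (g (2 * n + 2)))‖
          ≤ ‖csWord T g (2 * n + 1)‖ *
              ‖csU T (2 * n + 1) (g (2 * n + 1)) * csU T (2 * n + 2) (g (2 * n + 2))‖ :=
            norm_mul_le _ _
        _ ≤ (‖csU T 0 (g 0)‖ * ∏ r ∈ Finset.range n,
              ‖csU T (2 * r + 1) (g (2 * r + 1)) * csU T (2 * r + 2) (g (2 * r + 2))‖) *
              ‖csU T (2 * n + 1) (g (2 * n + 1)) * csU T (2 * n + 2) (g (2 * n + 2))‖ :=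
            mul_le_mul_of_nonneg_right (csWord_odd_bound T n g) (norm_nonneg _)
        _ = _ := by rw [mul_assoc]

theorem prod_range_odd_split (f : ℕ → ℝ) :
    ∀ n : ℕ, ∏ j ∈ Finset.range (2 * n + 1), f j =
      (∏ r ∈ Finset.range (n + 1), f (2 * r)) * ∏ r ∈ Finset.range n, f (2 * r + 1)
  | 0 => by simp
  | n + 1 => by
      have e : 2 * (n + 1) + 1 = 2 * n + 1 + 1 + 1 := by ring
      rw [e, Finset.prod_range_succ, Finset.prod_range_succ, prod_range_odd_split f n,
        Finset.prod_range_succ (fun r => f (2 * r)) (n + 1),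
        Finset.prod_range_succ (fun r => f (2 * r + 1)) n]
      have e2 : 2 * (n + 1) = 2 * n + 1 + 1 := by ring
      rw [e2]
      ring
theorem csU_even_eq (T : ℤ → H →L[ℂ] H) {j : ℕ} (h : Even j) (k : ℤ) :
    csU T j k = star (T k) := if_pos h

theorem csU_odd_eq (T : ℤ → H →L[ℂ] H) {j : ℕ} (h : ¬ Even j) (k : ℤ) :
    csU T j k = T k := if_neg h

theorem not_even_odd (r : ℕ) : ¬ Even (2 * r + 1) := by
  simp [Nat.even_add_one, parity_simps]

theorem norm_T_le (T : ℤ → H →L[ℂ] H) (ω : ℤ → ℝ) (C : ℝ) (hC : 0 ≤ C)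
    (h1 : ∀ i k : ℤ, ‖(ContinuousLinearMap.adjoint (T i)).comp (T k)‖ ≤ C ^ 2 * ω (i - k))
    (k : ℤ) : ‖T k‖ ≤ C * Real.sqrt (ω 0) := by
  have h := h1 k k
  rw [sub_self] at h
  calc ‖T k‖ = Real.sqrt (‖T k‖ * ‖T k‖) := (Real.sqrt_mul_self (norm_nonneg _)).symm
    _ ≤ Real.sqrt (C ^ 2 * ω 0) := by
        refine Real.sqrt_le_sqrt ?_
        rw [← ContinuousLinearMap.norm_adjoint_comp_self (T k)]
        exact h
    _ = C * Real.sqrt (ω 0) := by rw [Real.sqrt_mul (sq_nonneg C), Real.sqrt_sq hC]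

theorem norm_csU_le (T : ℤ → H →L[ℂ] H) (ω : ℤ → ℝ) (C : ℝ) (hC : 0 ≤ C)
    (h1 : ∀ i k : ℤ, ‖(ContinuousLinearMap.adjoint (T i)).comp (T k)‖ ≤ C ^ 2 * ω (i - k))
    (j : ℕ) (k : ℤ) : ‖csU T j k‖ ≤ C * Real.sqrt (ω 0) := by
  by_cases h : Even j
  · rw [csU_even_eq T h, norm_star]; exact norm_T_le T ω C hC h1 k
  · rw [csU_odd_eq T h]; exact norm_T_le T ω C hC h1 k

theorem pair_even_bound (T : ℤ → H →L[ℂ] H) (ω : ℤ → ℝ) (C : ℝ)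
    (h1 : ∀ i k : ℤ, ‖(ContinuousLinearMap.adjoint (T i)).comp (T k)‖ ≤ C ^ 2 * ω (i - k))
    (r : ℕ) (a b : ℤ) : ‖csU T (2 * r) a * csU T (2 * r + 1) b‖ ≤ C ^ 2 * ω (a - b) := by
  rw [csU_even_eq T (even_two_mul r), csU_odd_eq T (not_even_odd r),
    ContinuousLinearMap.star_eq_adjoint, ContinuousLinearMap.mul_def]
  exact h1 a b

theorem pair_odd_bound (T : ℤ → H →L[ℂ] H) (ω : ℤ → ℝ) (C : ℝ)
    (h2 : ∀ i k : ℤ, ‖(T i).comp (ContinuousLinearMap.adjoint (T k))‖ ≤ C ^ 2 * ω (i - k))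
    (r : ℕ) (a b : ℤ) : ‖csU T (2 * r + 1) a * csU T (2 * r + 2) b‖ ≤ C ^ 2 * ω (a - b) := by
  have he : Even (2 * r + 2) := ⟨r + 1, by ring⟩
  rw [csU_odd_eq T (not_even_odd r), csU_even_eq T he,
    ContinuousLinearMap.star_eq_adjoint, ContinuousLinearMap.mul_def]
  exact h2 a b

theorem csWord_path_bound (T : ℤ → H →L[ℂ] H) (ω : ℤ → ℝ) (hω : ∀ n, 0 ≤ ω n) (C : ℝ)
    (hC : 0 ≤ C)
    (h1 : ∀ i k : ℤ, ‖(ContinuousLinearMap.adjoint (T i)).comp (T k)‖ ≤ C ^ 2 * ω (i - k))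
    (h2 : ∀ i k : ℤ, ‖(T i).comp (ContinuousLinearMap.adjoint (T k))‖ ≤ C ^ 2 * ω (i - k))
    (n : ℕ) (g : ℕ → ℤ) :
    ‖csWord T g (2 * (n + 1))‖ ≤ C ^ (2 * (n + 1)) * Real.sqrt (ω 0) *
      ∏ j ∈ Finset.range (2 * n + 1), Real.sqrt (ω (g j - g (j + 1))) := by
  set x := ‖csWord T g (2 * (n + 1))‖ with hx
  set E := ∏ r ∈ Finset.range (n + 1), ω (g (2 * r) - g (2 * r + 1)) with hE
  set O := ∏ r ∈ Finset.range n, ω (g (2 * r + 1) - g (2 * r + 2)) with hO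
  have hEnn : 0 ≤ E := Finset.prod_nonneg fun r _ => hω _
  have hOnn : 0 ≤ O := Finset.prod_nonneg fun r _ => hω _
  set B := C * Real.sqrt (ω 0) with hB
  have hBnn : 0 ≤ B := mul_nonneg hC (Real.sqrt_nonneg _)
  -- first grouping
  have hEprod : (C ^ 2) ^ (n + 1) * E =
      ∏ r ∈ Finset.range (n + 1), (C ^ 2 * ω (g (2 * r) - g (2 * r + 1))) := by
    rw [Finset.prod_mul_distrib, Finset.prod_const, Finset.card_range]
  have hOprod : (C ^ 2) ^ n * O =
      ∏ r ∈ Finset.range n, (C ^ 2 * ω (g (2 * r + 1) - g (2 * r + 2))) := by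
    rw [Finset.prod_mul_distrib, Finset.prod_const, Finset.card_range]
  have hP1 : x ≤ (C ^ 2) ^ (n + 1) * E := by
    rw [hEprod]
    exact (csWord_even_bound T (n + 1) g).trans
      (Finset.prod_le_prod (fun r _ => norm_nonneg _)
        (fun r _ => pair_even_bound T ω C h1 r _ _))
  have hP2 : x ≤ B * ((C ^ 2) ^ n * O) * B := by
    have hw : csWord T g (2 * (n + 1)) = csWord T g (2 * n + 1) *
        csU T (2 * n + 1) (g (2 * n + 1)) := by
      rw [show 2 * (n + 1) = 2 * n + 1 + 1 by ring, csWord]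
    rw [hx, hw, hOprod]
    calc ‖csWord T g (2 * n + 1) * csU T (2 * n + 1) (g (2 * n + 1))‖
        ≤ ‖csWord T g (2 * n + 1)‖ * ‖csU T (2 * n + 1) (g (2 * n + 1))‖ := norm_mul_le _ _
      _ ≤ (B * ∏ r ∈ Finset.range n, (C ^ 2 * ω (g (2 * r + 1) - g (2 * r + 2)))) * B := by
          refine mul_le_mul ?_ (norm_csU_le T ω C hC h1 _ _) (norm_nonneg _)
            (mul_nonneg hBnn (Finset.prod_nonneg fun r _ =>
              mul_nonneg (sq_nonneg C) (hω _)))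
          refine (csWord_odd_bound T n g).trans ?_
          exact mul_le_mul (norm_csU_le T ω C hC h1 _ _)
            (Finset.prod_le_prod (fun r _ => norm_nonneg _)
              (fun r _ => pair_odd_bound T ω C h2 r _ _))
            (Finset.prod_nonneg fun r _ => norm_nonneg _) hBnn
  -- combine via geometric mean
  set W := C ^ (2 * (n + 1)) * Real.sqrt (ω 0) *
    ∏ j ∈ Finset.range (2 * n + 1), Real.sqrt (ω (g j - g (j + 1))) with hW
  have hWnn : 0 ≤ W := by
    refine mul_nonneg (mul_nonneg (pow_nonneg hC _) (Real.sqrt_nonneg _))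
      (Finset.prod_nonneg fun j _ => Real.sqrt_nonneg _)
  have hsq2 : (∏ j ∈ Finset.range (2 * n + 1), Real.sqrt (ω (g j - g (j + 1)))) ^ 2 =
      ∏ j ∈ Finset.range (2 * n + 1), ω (g j - g (j + 1)) := by
    rw [← Finset.prod_pow]
    exact Finset.prod_congr rfl fun j _ => Real.sq_sqrt (hω _)
  have hsplit : (∏ j ∈ Finset.range (2 * n + 1), ω (g j - g (j + 1))) = E * O := by
    rw [hE, hO]
    exact prod_range_odd_split (fun j => ω (g j - g (j + 1))) n
  have hWsq : W ^ 2 = ((C ^ 2) ^ (n + 1) * E) * (B * ((C ^ 2) ^ n * O) * B) := by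
    rw [hW, mul_pow, mul_pow, hsq2, hsplit, hB, pow_mul C 2 (n + 1)]
    ring
  have hxnn : 0 ≤ x := norm_nonneg _
  have key : x ^ 2 ≤ W ^ 2 := by
    rw [hWsq, pow_two]
    exact mul_le_mul hP1 hP2 hxnn (mul_nonneg (pow_nonneg (sq_nonneg C) _) hEnn)
  calc x = Real.sqrt (x ^ 2) := (Real.sqrt_sq hxnn).symm
    _ ≤ Real.sqrt (W ^ 2) := Real.sqrt_le_sqrt key
    _ = W := Real.sqrt_sq hWnn
theorem sum_sqrt_le (ω : ℤ → ℝ) (A : ℝ)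
    (hA : HasSum (fun n : ℤ => (ω n) ^ ((1 : ℝ) / 2)) A) (F : Finset ℤ) (a : ℤ) :
    ∑ k ∈ F, Real.sqrt (ω (a - k)) ≤ A := by
  have hA' : HasSum (fun n : ℤ => Real.sqrt (ω n)) A := by
    have : (fun n : ℤ => Real.sqrt (ω n)) = fun n : ℤ => (ω n) ^ ((1 : ℝ) / 2) :=
      funext fun n => Real.sqrt_eq_rpow (ω n)
    rw [this]; exact hA
  have hinj : ∀ x ∈ F, ∀ y ∈ F, a - x = a - y → x = y := fun x _ y _ h => by omega
  calc ∑ k ∈ F, Real.sqrt (ω (a - k))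
      = ∑ x ∈ F.image (fun k => a - k), Real.sqrt (ω x) :=
        (Finset.sum_image (f := fun x => Real.sqrt (ω x)) (g := fun k => a - k) hinj).symm
    _ ≤ A := sum_le_hasSum _ (fun k _ => Real.sqrt_nonneg _) hA'

theorem path_sum_le (ω : ℤ → ℝ) (A : ℝ)
    (hA : HasSum (fun n : ℤ => (ω n) ^ ((1 : ℝ) / 2)) A) (hA0 : 0 ≤ A) (F : Finset ℤ) :
    ∀ m : ℕ, ∑ g ∈ Fintype.piFinset (fun _ : Fin (m + 1) => F),
        ∏ j ∈ Finset.range m, Real.sqrt (ω (csExt g j - csExt g (j + 1)))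
      ≤ (F.card : ℝ) * A ^ m
  | 0 => by
      have h : ∀ g ∈ Fintype.piFinset (fun _ : Fin 1 => F),
          (∏ j ∈ Finset.range 0, Real.sqrt (ω (csExt g j - csExt g (j + 1)))) = 1 :=
        fun _ _ => rfl
      rw [Finset.sum_congr rfl h, Finset.sum_const, Fintype.card_piFinset]
      simp
  | m + 1 => by
      have hbij : ∑ p ∈ (Fintype.piFinset (fun _ : Fin (m + 1) => F)) ×ˢ F,
            ((∏ j ∈ Finset.range m, Real.sqrt (ω (csExt p.1 j - csExt p.1 (j + 1)))) *
              Real.sqrt (ω (csExt p.1 m - p.2)))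
          = ∑ g ∈ Fintype.piFinset (fun _ : Fin (m + 2) => F),
            ∏ j ∈ Finset.range (m + 1), Real.sqrt (ω (csExt g j - csExt g (j + 1))) := by
        refine Finset.sum_bij' (fun (p : (Fin (m + 1) → ℤ) × ℤ) (_ : p ∈ _) => csSnoc p.1 p.2)
          (fun (g : Fin (m + 2) → ℤ) (_ : g ∈ _) =>
            ((fun i => g (Fin.castSucc i)), g (Fin.last (m + 1)))) ?_ ?_ ?_ ?_ ?_
        · intro p hp
          rw [Finset.mem_product] at hp
          rw [Fintype.mem_piFinset]
          intro i
          refine Fin.lastCases ?_ ?_ i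
          · rw [csSnoc_last]; exact hp.2
          · intro i
            rw [csSnoc_castSucc]
            exact Fintype.mem_piFinset.mp hp.1 i
        · intro g hg
          rw [Finset.mem_product]
          exact ⟨Fintype.mem_piFinset.mpr fun i => Fintype.mem_piFinset.mp hg _,
            Fintype.mem_piFinset.mp hg _⟩
        · intro p hp
          ext i
          · show csSnoc p.1 p.2 (Fin.castSucc i) = p.1 i
            rw [csSnoc_castSucc]
          · show csSnoc p.1 p.2 (Fin.last (m + 1)) = p.2
            rw [csSnoc_last]
        · intro g hg
          exact csSnoc_eta g
        · intro p hp
          rw [Finset.prod_range_succ]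
          congr 1
          · refine Finset.prod_congr rfl fun j hj => ?_
            rw [Finset.mem_range] at hj
            rw [csExt_snoc_lt p.1 p.2 (hj.trans m.lt_succ_self),
              csExt_snoc_lt p.1 p.2 (Nat.succ_lt_succ hj)]
          · rw [csExt_snoc_lt p.1 p.2 m.lt_succ_self, csExt_snoc_last]
      rw [← hbij, Finset.sum_product]
      have hstep : ∀ g ∈ Fintype.piFinset (fun _ : Fin (m + 1) => F),
          (∑ k ∈ F, (∏ j ∈ Finset.range m,
              Real.sqrt (ω (csExt g j - csExt g (j + 1)))) *
            Real.sqrt (ω (csExt g m - k)))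
          ≤ (∏ j ∈ Finset.range m, Real.sqrt (ω (csExt g j - csExt g (j + 1)))) * A := by
        intro g _
        rw [← Finset.mul_sum]
        exact mul_le_mul_of_nonneg_left (sum_sqrt_le ω A hA F _)
          (Finset.prod_nonneg fun j _ => Real.sqrt_nonneg _)
      calc (∑ g ∈ Fintype.piFinset (fun _ : Fin (m + 1) => F), ∑ k ∈ F,
              (∏ j ∈ Finset.range m, Real.sqrt (ω (csExt g j - csExt g (j + 1)))) *
                Real.sqrt (ω (csExt g m - k)))
          ≤ ∑ g ∈ Fintype.piFinset (fun _ : Fin (m + 1) => F),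
              (∏ j ∈ Finset.range m, Real.sqrt (ω (csExt g j - csExt g (j + 1)))) * A :=
            Finset.sum_le_sum hstep
        _ = (∑ g ∈ Fintype.piFinset (fun _ : Fin (m + 1) => F),
              ∏ j ∈ Finset.range m, Real.sqrt (ω (csExt g j - csExt g (j + 1)))) * A :=
            (Finset.sum_mul _ _ _).symm
        _ ≤ ((F.card : ℝ) * A ^ m) * A :=
            mul_le_mul_of_nonneg_right (path_sum_le ω A hA hA0 F m) hA0
        _ = (F.card : ℝ) * A ^ (m + 1) := by ring

theorem csSprod_eq_pow (T : ℤ → H →L[ℂ] H) (F : Finset ℤ) :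
    ∀ n : ℕ, csSprod T F (2 * n) = ((star (∑ k ∈ F, T k)) * (∑ k ∈ F, T k)) ^ n
  | 0 => by rw [pow_zero]; rfl
  | n + 1 => by
      have e : 2 * (n + 1) = 2 * n + 1 + 1 := by ring
      have heven : ∑ k ∈ F, csU T (2 * n) k = star (∑ k ∈ F, T k) := by
        rw [Finset.sum_congr rfl fun k _ => csU_even_eq T (even_two_mul n) k, ← star_sum]
      have hodd : ∑ k ∈ F, csU T (2 * n + 1) k = ∑ k ∈ F, T k := by
        rw [Finset.sum_congr rfl fun k _ => csU_odd_eq T (not_even_odd n) k]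
      rw [e, csSprod, csSprod, csSprod_eq_pow T F n, heven, hodd, mul_assoc, ← pow_succ]

theorem csSprod_norm_bound (T : ℤ → H →L[ℂ] H) (ω : ℤ → ℝ) (hω : ∀ n, 0 ≤ ω n) (C A : ℝ)
    (hC : 0 ≤ C) (hA : HasSum (fun n : ℤ => (ω n) ^ ((1 : ℝ) / 2)) A) (hA0 : 0 ≤ A)
    (h1 : ∀ i k : ℤ, ‖(ContinuousLinearMap.adjoint (T i)).comp (T k)‖ ≤ C ^ 2 * ω (i - k))
    (h2 : ∀ i k : ℤ, ‖(T i).comp (ContinuousLinearMap.adjoint (T k))‖ ≤ C ^ 2 * ω (i - k))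
    (F : Finset ℤ) (n : ℕ) :
    ‖csSprod T F (2 * (n + 1))‖ ≤
      (F.card : ℝ) * (C ^ (2 * (n + 1)) * Real.sqrt (ω 0) * A ^ (2 * n + 1)) := by
  rw [csSprod_expand]
  calc ‖∑ g ∈ Fintype.piFinset (fun _ : Fin (2 * (n + 1)) => F),
          csWord T (csExt g) (2 * (n + 1))‖
      ≤ ∑ g ∈ Fintype.piFinset (fun _ : Fin (2 * (n + 1)) => F),
          ‖csWord T (csExt g) (2 * (n + 1))‖ := norm_sum_le _ _
    _ ≤ ∑ g ∈ Fintype.piFinset (fun _ : Fin (2 * (n + 1)) => F),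
          C ^ (2 * (n + 1)) * Real.sqrt (ω 0) *
            ∏ j ∈ Finset.range (2 * n + 1), Real.sqrt (ω (csExt g j - csExt g (j + 1))) :=
        Finset.sum_le_sum fun g _ => csWord_path_bound T ω hω C hC h1 h2 n (csExt g)
    _ = C ^ (2 * (n + 1)) * Real.sqrt (ω 0) *
          ∑ g ∈ Fintype.piFinset (fun _ : Fin (2 * (n + 1)) => F),
            ∏ j ∈ Finset.range (2 * n + 1), Real.sqrt (ω (csExt g j - csExt g (j + 1))) :=
        (Finset.mul_sum _ _ _).symm
    _ ≤ C ^ (2 * (n + 1)) * Real.sqrt (ω 0) * ((F.card : ℝ) * A ^ (2 * n + 1)) := by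
        refine mul_le_mul_of_nonneg_left ?_
          (mul_nonneg (pow_nonneg hC _) (Real.sqrt_nonneg _))
        exact path_sum_le ω A hA hA0 F (2 * n + 1)
    _ = (F.card : ℝ) * (C ^ (2 * (n + 1)) * Real.sqrt (ω 0) * A ^ (2 * n + 1)) := by ring

theorem le_of_pow_bound {x r D : ℝ} (hx : 0 ≤ x) (hr : 0 ≤ r)
    (h : ∀ m : ℕ, ∃ N : ℕ, m ≤ N ∧ x ^ (N + 1) ≤ D * r ^ N) : x ≤ r := by
  rcases eq_or_lt_of_le hr with hr0 | hr0
  · obtain ⟨N, hN1, hN⟩ := h 1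
    rw [← hr0] at hN ⊢
    rw [zero_pow (by omega : N ≠ 0), mul_zero] at hN
    have : x ^ (N + 1) = 0 := le_antisymm hN (pow_nonneg hx _)
    exact le_of_eq (pow_eq_zero_iff (Nat.succ_ne_zero N) |>.mp this)
  · by_contra hc
    push_neg at hc
    have hq : 1 < x / r := (one_lt_div hr0).mpr hc
    obtain ⟨M, hM⟩ := pow_unbounded_of_one_lt (D / r) hq
    obtain ⟨N, hMN, hN⟩ := h M
    have hle1 : (x / r) ^ M ≤ (x / r) ^ (N + 1) :=
      pow_le_pow_right₀ hq.le (hMN.trans (Nat.le_succ N))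
    have hle2 : (x / r) ^ (N + 1) ≤ D / r := by
      rw [div_pow, div_le_div_iff₀ (pow_pos hr0 _) hr0]
      calc x ^ (N + 1) * r ≤ (D * r ^ N) * r := mul_le_mul_of_nonneg_right hN hr0.le
        _ = D * r ^ (N + 1) := by ring
    exact absurd (hM.trans_le (hle1.trans hle2)) (lt_irrefl _)

end CotlarSteinAux

open CotlarSteinAux in
/-- Cotlar–Stein almost orthogonality lemma: if a finitely supported family of
bounded operators `T k` on a Hilbert space satisfies `‖T i * T k‖, ‖T i T k*‖ ≤ C² ω(i-k)`
with `A = ∑ ω(n)^(1/2) < ∞`, then `‖∑ T k‖ ≤ C A`. -/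
theorem stmt_1 {H : Type*} [NormedAddCommGroup H] [InnerProductSpace ℂ H] [CompleteSpace H]
    (T : ℤ → H →L[ℂ] H) (hfin : Set.Finite (Function.support T))
    (ω : ℤ → ℝ) (hω : ∀ n, 0 ≤ ω n) (C A : ℝ) (hC : 0 ≤ C)
    (hA : HasSum (fun n : ℤ => (ω n) ^ ((1 : ℝ) / 2)) A)
    (h1 : ∀ i k : ℤ, ‖(ContinuousLinearMap.adjoint (T i)).comp (T k)‖ ≤ C ^ 2 * ω (i - k))
    (h2 : ∀ i k : ℤ, ‖(T i).comp (ContinuousLinearMap.adjoint (T k))‖ ≤ C ^ 2 * ω (i - k)) :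
    ‖∑ᶠ k, T k‖ ≤ C * A := by
  classical
  rw [finsum_eq_sum T hfin]
  set F := hfin.toFinset with hF
  set S := ∑ k ∈ F, T k with hS
  have hA0 : 0 ≤ A :=
    le_trans (Real.rpow_nonneg (hω 0) _) (le_hasSum hA 0 fun j _ => Real.rpow_nonneg (hω j) _)
  refine le_of_pow_bound (norm_nonneg S) (mul_nonneg hC hA0)
    (D := (F.card : ℝ) * (C * Real.sqrt (ω 0))) ?_
  intro m
  have h2m : m < 2 ^ m := Nat.lt_two_pow_self (n := m)
  have h1m : 1 ≤ 2 ^ m := Nat.one_le_two_pow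
  refine ⟨2 * (2 ^ m - 1) + 1, by omega, ?_⟩
  set n := 2 ^ m - 1 with hn
  have hn1 : n + 1 = 2 ^ m := by omega
  have hsa : IsSelfAdjoint (star S * S) := by
    rw [IsSelfAdjoint, star_mul, star_star]
  have hpow : ‖(star S * S) ^ 2 ^ m‖₊ = ‖star S * S‖₊ ^ 2 ^ m := hsa.nnnorm_pow_two_pow m
  have hpowR : ‖(star S * S) ^ 2 ^ m‖ = ‖star S * S‖ ^ 2 ^ m := by
    have := congrArg (fun t : NNReal => (t : ℝ)) hpow
    simpa [NNReal.coe_pow] using this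
  have e1 : ‖S‖ ^ (2 * (n + 1)) = ‖(star S * S) ^ (n + 1)‖ := by
    calc ‖S‖ ^ (2 * (n + 1)) = (‖S‖ ^ 2) ^ (n + 1) := by rw [pow_mul]
      _ = ‖star S * S‖ ^ (n + 1) := by rw [sq, ← CStarRing.norm_star_mul_self]
      _ = ‖(star S * S) ^ (n + 1)‖ := by rw [hn1]; exact hpowR.symm
  have e2 : (star S * S) ^ (n + 1) = csSprod T F (2 * (n + 1)) :=
    (csSprod_eq_pow T F (n + 1)).symm
  show ‖S‖ ^ (2 * (n + 1)) ≤ (F.card : ℝ) * (C * Real.sqrt (ω 0)) * (C * A) ^ (2 * n + 1)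
  calc ‖S‖ ^ (2 * (n + 1)) = ‖csSprod T F (2 * (n + 1))‖ := by rw [e1, e2]
    _ ≤ (F.card : ℝ) * (C ^ (2 * (n + 1)) * Real.sqrt (ω 0) * A ^ (2 * n + 1)) :=
        csSprod_norm_bound T ω hω C A hC hA hA0 h1 h2 F n
    _ = (F.card : ℝ) * (C * Real.sqrt (ω 0)) * (C * A) ^ (2 * n + 1) := by
        have e3 : 2 * (n + 1) = 2 * n + 1 + 1 := by ring
        rw [e3, pow_succ, mul_pow]
        ring
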